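/- Let C_n := 2·n·sin(π/n) for n ≥ 3. Then C_n + (10/3)·(C_{2n}² − C_n²)/(2·C_{2n} + 3·C_n) > 2π, and C_n + (10/3)·(C_{2n}² − C_n²)/(2·C_{2n} + 3·C_n + (8/9)·(C_{2n} − C_n)²/(2·C_{2n} + 3·C_n)) < 2π. -/

import Mathlib

open Real Set

private lemma aux_nonneg {f f' : ℝ → ℝ} (h0 : f 0 = 0)
    (hd : ∀ y : ℝ, HasDerivAt f (f' y) y) (hm : ∀ y : ℝ, 0 ≤ y → 0 ≤ f' y)
    {x : ℝ} (hx : 0 ≤ x) : 0 ≤ f x := by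
  have hmono : MonotoneOn f (Ici (0:ℝ)) := by
    apply monotoneOn_of_deriv_nonneg (convex_Ici 0)
    · exact fun y _ => (hd y).continuousAt.continuousWithinAt
    · exact fun y _ => (hd y).differentiableAt.differentiableWithinAt
    · intro y hy
      rw [(hd y).deriv]
      exact hm y (le_of_lt (by simpa using hy))
  have := hmono (self_mem_Ici) (mem_Ici.mpr hx) hx
  simpa [h0] using this

private lemma T1 {x : ℝ} (hx : 0 ≤ x) : x - x^3/6 ≤ Real.sin x := by
  have h := aux_nonneg (f := fun t => Real.sin t - (t - t^3/6))
      (f' := fun t => Real.cos t - (1 - t^2/2)) (by norm_num)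
      (fun y => by
        have H := (Real.hasDerivAt_sin y).sub
          ((hasDerivAt_id y).sub ((hasDerivAt_pow 3 y).div_const 6))
        exact H.congr_deriv (by ring))
      (fun y _ => by nlinarith [Real.one_sub_sq_div_two_le_cos (x := y)]) hx
  linarith [h]

private lemma T2 {x : ℝ} (hx : 0 ≤ x) : Real.cos x ≤ 1 - x^2/2 + x^4/24 := by
  have h := aux_nonneg (f := fun t => 1 - t^2/2 + t^4/24 - Real.cos t)
      (f' := fun t => Real.sin t - (t - t^3/6)) (by norm_num)
      (fun y => by
        have H := (((hasDerivAt_const y (1:ℝ)).sub ((hasDerivAt_pow 2 y).div_const 2)).add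
          ((hasDerivAt_pow 4 y).div_const 24)).sub (Real.hasDerivAt_cos y)
        exact H.congr_deriv (by ring))
      (fun y hy => by linarith [T1 hy]) hx
  linarith [h]

private lemma T3 {x : ℝ} (hx : 0 ≤ x) : Real.sin x ≤ x - x^3/6 + x^5/120 := by
  have h := aux_nonneg (f := fun t => t - t^3/6 + t^5/120 - Real.sin t)
      (f' := fun t => (1 - t^2/2 + t^4/24) - Real.cos t) (by norm_num)
      (fun y => by
        have H := (((hasDerivAt_id y).sub ((hasDerivAt_pow 3 y).div_const 6)).add
          ((hasDerivAt_pow 5 y).div_const 120)).sub (Real.hasDerivAt_sin y)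
        exact H.congr_deriv (by ring))
      (fun y hy => by linarith [T2 hy]) hx
  linarith [h]

private lemma T4 {x : ℝ} (hx : 0 ≤ x) : 1 - x^2/2 + x^4/24 - x^6/720 ≤ Real.cos x := by
  have h := aux_nonneg (f := fun t => Real.cos t - (1 - t^2/2 + t^4/24 - t^6/720))
      (f' := fun t => (t - t^3/6 + t^5/120) - Real.sin t) (by norm_num)
      (fun y => by
        have H := (Real.hasDerivAt_cos y).sub
          ((((hasDerivAt_const y (1:ℝ)).sub ((hasDerivAt_pow 2 y).div_const 2)).add
            ((hasDerivAt_pow 4 y).div_const 24)).sub ((hasDerivAt_pow 6 y).div_const 720))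
        exact H.congr_deriv (by ring))
      (fun y hy => by linarith [T3 hy]) hx
  linarith [h]

private lemma T5 {x : ℝ} (hx : 0 ≤ x) :
    x - x^3/6 + x^5/120 - x^7/5040 ≤ Real.sin x := by
  have h := aux_nonneg (f := fun t => Real.sin t - (t - t^3/6 + t^5/120 - t^7/5040))
      (f' := fun t => Real.cos t - (1 - t^2/2 + t^4/24 - t^6/720)) (by norm_num)
      (fun y => by
        have H := (Real.hasDerivAt_sin y).sub
          ((((hasDerivAt_id y).sub ((hasDerivAt_pow 3 y).div_const 6)).add
            ((hasDerivAt_pow 5 y).div_const 120)).sub ((hasDerivAt_pow 7 y).div_const 5040))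
        exact H.congr_deriv (by ring))
      (fun y hy => by linarith [T4 hy]) hx
  linarith [h]

private lemma T6 {x : ℝ} (hx : 0 ≤ x) :
    Real.cos x ≤ 1 - x^2/2 + x^4/24 - x^6/720 + x^8/40320 := by
  have h := aux_nonneg
      (f := fun t => (1 - t^2/2 + t^4/24 - t^6/720 + t^8/40320) - Real.cos t)
      (f' := fun t => Real.sin t - (t - t^3/6 + t^5/120 - t^7/5040)) (by norm_num)
      (fun y => by
        have H := (((((hasDerivAt_const y (1:ℝ)).sub ((hasDerivAt_pow 2 y).div_const 2)).add
            ((hasDerivAt_pow 4 y).div_const 24)).sub ((hasDerivAt_pow 6 y).div_const 720)).add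
            ((hasDerivAt_pow 8 y).div_const 40320)).sub (Real.hasDerivAt_cos y)
        exact H.congr_deriv (by ring))
      (fun y hy => by linarith [T5 hy]) hx
  linarith [h]

private lemma T7 {x : ℝ} (hx : 0 ≤ x) :
    Real.sin x ≤ x - x^3/6 + x^5/120 - x^7/5040 + x^9/362880 := by
  have h := aux_nonneg
      (f := fun t => (t - t^3/6 + t^5/120 - t^7/5040 + t^9/362880) - Real.sin t)
      (f' := fun t => (1 - t^2/2 + t^4/24 - t^6/720 + t^8/40320) - Real.cos t) (by norm_num)
      (fun y => by
        have H := (((((hasDerivAt_id y).sub ((hasDerivAt_pow 3 y).div_const 6)).add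
            ((hasDerivAt_pow 5 y).div_const 120)).sub ((hasDerivAt_pow 7 y).div_const 5040)).add
            ((hasDerivAt_pow 9 y).div_const 362880)).sub (Real.hasDerivAt_sin y)
        exact H.congr_deriv (by ring))
      (fun y hy => by linarith [T6 hy]) hx
  linarith [h]

set_option maxHeartbeats 1000000 in
private lemma key1 {x s c : ℝ} (hx0 : 0 < x) (hx1 : x ≤ 1)
    (hsL : x - x^3/6 + x^5/120 - x^7/5040 ≤ s)
    (hcL : 1 - x^2/2 + x^4/24 - x^6/720 ≤ c)
    (hcU : c ≤ 1 - x^2/2 + x^4/24 - x^6/720 + x^8/40320)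
    (hc1 : c ≤ 1) :
    3*x*(2+3*c) < s*(10+6*c-c^2) := by
  have hx0' : (0:ℝ) ≤ x := hx0.le
  have p2 : x^2 ≤ 1 := pow_le_one₀ hx0' hx1
  have p3 : x^3 ≤ x := by nlinarith
  have p4 : x^4 ≤ x^2 := by nlinarith
  have p5 : x^5 ≤ x := by nlinarith
  have p6 : x^6 ≤ x^2 := by nlinarith
  have p7 : x^7 ≤ x := by nlinarith
  have p8 : x^8 ≤ x^2 := by nlinarith
  have p10 : x^10 ≤ x^2 := by nlinarith
  have p12 : x^12 ≤ x^2 := by nlinarith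
  have hsL0 : 0 ≤ x - x^3/6 + x^5/120 - x^7/5040 := by nlinarith [pow_nonneg hx0' 5]
  have hcL0 : 0 ≤ 1 - x^2/2 + x^4/24 - x^6/720 := by nlinarith [pow_nonneg hx0' 4]
  have hcL1 : 1 - x^2/2 + x^4/24 - x^6/720 ≤ 1 := by nlinarith [pow_nonneg hx0' 6]
  have hc0 : 0 ≤ c := le_trans hcL0 hcL
  -- R1 positivity
  have hR : 0 < 3/70 - 167/17280 * x^2 + 577/604800 * x^4 - 79/1451520 * x^6
      + 83/43545600 * x^8 - 17/435456000 * x^10 + 1/2612736000 * x^12 := by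
    nlinarith [pow_nonneg hx0' 4, pow_nonneg hx0' 8, pow_nonneg hx0' 12, sq_nonneg x]
  have hx7 : 0 < x^7 := pow_pos hx0 7
  have hiden : (x - x^3/6 + x^5/120 - x^7/5040) *
        (10 + 6*(1 - x^2/2 + x^4/24 - x^6/720) - (1 - x^2/2 + x^4/24 - x^6/720)^2)
      - 3*x*(2 + 3*(1 - x^2/2 + x^4/24 - x^6/720 + x^8/40320))
      = x^7 * (3/70 - 167/17280 * x^2 + 577/604800 * x^4 - 79/1451520 * x^6
      + 83/43545600 * x^8 - 17/435456000 * x^10 + 1/2612736000 * x^12) := by ring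
  have hkey : 3*x*(2 + 3*(1 - x^2/2 + x^4/24 - x^6/720 + x^8/40320))
      < (x - x^3/6 + x^5/120 - x^7/5040) *
        (10 + 6*(1 - x^2/2 + x^4/24 - x^6/720) - (1 - x^2/2 + x^4/24 - x^6/720)^2) := by
    linarith [hiden, mul_pos hx7 hR]
  have step1 : 3*x*(2+3*c) ≤ 3*x*(2 + 3*(1 - x^2/2 + x^4/24 - x^6/720 + x^8/40320)) := by
    nlinarith [mul_nonneg hx0' (sub_nonneg.2 hcU)]
  have step2 : (x - x^3/6 + x^5/120 - x^7/5040) *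
        (10 + 6*(1 - x^2/2 + x^4/24 - x^6/720) - (1 - x^2/2 + x^4/24 - x^6/720)^2)
      ≤ s*(10+6*c-c^2) := by
    nlinarith [mul_nonneg (sub_nonneg.2 hsL) (by nlinarith : (0:ℝ) ≤ 10+6*c-c^2),
      mul_nonneg (mul_nonneg hsL0 (sub_nonneg.2 hcL))
        (by nlinarith : (0:ℝ) ≤ 6 - c - (1 - x^2/2 + x^4/24 - x^6/720))]
  linarith


set_option maxHeartbeats 8000000 in

private lemma key2 {x s c : ℝ} (hx0 : 0 < x) (hx1 : x ≤ 1)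
    (hsU : s ≤ x - x^3/6 + x^5/120 - x^7/5040 + x^9/362880)
    (hcL : 1 - x^2/2 + x^4/24 - x^6/720 ≤ c)
    (hcU : c ≤ 1 - x^2/2 + x^4/24 - x^6/720 + x^8/40320)
    (hc1 : c ≤ 1) :
    s*(60+134*c+32*c^2-c^3) < x*(44+92*c+89*c^2) := by
  have hx0' : (0:ℝ) ≤ x := hx0.le
  have p2 : x^2 ≤ 1 := pow_le_one₀ hx0' hx1
  have p3 : x^3 ≤ x := by nlinarith
  have p4 : x^4 ≤ x^2 := by nlinarith
  have p5 : x^5 ≤ x := by nlinarith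
  have p6 : x^6 ≤ x^2 := by nlinarith
  have p7 : x^7 ≤ x := by nlinarith
  have p8 : x^8 ≤ x^2 := by nlinarith
  have p9 : x^9 ≤ x := by nlinarith
  have hsU0 : 0 ≤ x - x^3/6 + x^5/120 - x^7/5040 + x^9/362880 := by
    nlinarith [pow_nonneg hx0' 5, pow_nonneg hx0' 9]
  have hcL0 : 0 ≤ 1 - x^2/2 + x^4/24 - x^6/720 := by nlinarith [pow_nonneg hx0' 4]
  have hcU1 : 1 - x^2/2 + x^4/24 - x^6/720 + x^8/40320 ≤ 1 := by
    nlinarith [pow_nonneg hx0' 4, pow_nonneg hx0' 8]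
  have hR : 0 < 29/42 - 3223/20160 * x^2 + 1867/120960 * x^4 - 271/453600 * x^6
      - 1621/101606400 * x^8 + 20143/6096384000 * x^10 - 9221/43893964800 * x^12
      + 5723/658409472000 * x^14 - 24193/92177326080000 * x^16
      + 2197/368709304320000 * x^18 - 2689/26547069911040000 * x^20
      + 11/8849023303680000 * x^22 - 1/99109061001216000 * x^24
      + 1/23786174640291840000 * x^26 := by
    nlinarith [pow_le_one₀ (n:=8) hx0' hx1, pow_le_one₀ (n:=12) hx0' hx1,
      pow_le_one₀ (n:=16) hx0' hx1, pow_le_one₀ (n:=20) hx0' hx1,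
      pow_le_one₀ (n:=24) hx0' hx1,
      pow_nonneg hx0' 4, pow_nonneg hx0' 8, pow_nonneg hx0' 10, pow_nonneg hx0' 14,
      pow_nonneg hx0' 18, pow_nonneg hx0' 22, pow_nonneg hx0' 26, sq_nonneg x]
  have hkey : (x - x^3/6 + x^5/120 - x^7/5040 + x^9/362880) *
        (60 + 134*(1 - x^2/2 + x^4/24 - x^6/720 + x^8/40320)
         + 32*(1 - x^2/2 + x^4/24 - x^6/720 + x^8/40320)^2
         - (1 - x^2/2 + x^4/24 - x^6/720 + x^8/40320)^3)
      < x*(44 + 92*(1 - x^2/2 + x^4/24 - x^6/720)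
        + 89*(1 - x^2/2 + x^4/24 - x^6/720)^2) := by
    have hiden : x*(44 + 92*(1 - x^2/2 + x^4/24 - x^6/720)
          + 89*(1 - x^2/2 + x^4/24 - x^6/720)^2)
        - (x - x^3/6 + x^5/120 - x^7/5040 + x^9/362880) *
          (60 + 134*(1 - x^2/2 + x^4/24 - x^6/720 + x^8/40320)
           + 32*(1 - x^2/2 + x^4/24 - x^6/720 + x^8/40320)^2
           - (1 - x^2/2 + x^4/24 - x^6/720 + x^8/40320)^3)
        = x^7 * (29/42 - 3223/20160 * x^2 + 1867/120960 * x^4 - 271/453600 * x^6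
        - 1621/101606400 * x^8 + 20143/6096384000 * x^10 - 9221/43893964800 * x^12
        + 5723/658409472000 * x^14 - 24193/92177326080000 * x^16
        + 2197/368709304320000 * x^18 - 2689/26547069911040000 * x^20
        + 11/8849023303680000 * x^22 - 1/99109061001216000 * x^24
        + 1/23786174640291840000 * x^26) := by ring
    linarith [hiden, mul_pos (pow_pos hx0 7) hR]
  set su : ℝ := x - x^3/6 + x^5/120 - x^7/5040 + x^9/362880 with hsu
  set cu : ℝ := 1 - x^2/2 + x^4/24 - x^6/720 + x^8/40320 with hcud
  set cl : ℝ := 1 - x^2/2 + x^4/24 - x^6/720 with hcld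
  have hc0 : 0 ≤ c := le_trans hcL0 hcL
  have hcu0 : 0 ≤ cu := le_trans hc0 hcU
  have step1 : x*(44 + 92*cl + 89*cl^2) ≤ x*(44+92*c+89*c^2) := by
    nlinarith [mul_nonneg (mul_nonneg hx0' (sub_nonneg.2 hcL))
      (by nlinarith : (0:ℝ) ≤ 92 + 89*(c + cl))]
  have step2 : s*(60+134*c+32*c^2-c^3) ≤ su * (60 + 134*cu + 32*cu^2 - cu^3) := by
    have hq : (0:ℝ) ≤ 60+134*c+32*c^2-c^3 := by nlinarith
    nlinarith [mul_nonneg (sub_nonneg.2 hsU) hq,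
      mul_nonneg (mul_nonneg hsU0 (sub_nonneg.2 hcU))
        (by nlinarith : (0:ℝ) ≤ 134 + 32*(c + cu) - (c^2 + c*cu + cu^2))]
  linarith


set_option maxHeartbeats 2000000 in
theorem huygens_refined_bounds (n : ℕ) (hn : 3 ≤ n) :
    (let C : ℕ → ℝ := fun m => 2 * m * Real.sin (Real.pi / m)
     C n + (10 / 3) * ((C (2 * n)) ^ 2 - (C n) ^ 2) /
        (2 * C (2 * n) + 3 * C n) > 2 * Real.pi) ∧
    (let C : ℕ → ℝ := fun m => 2 * m * Real.sin (Real.pi / m)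
     C n + (10 / 3) * ((C (2 * n)) ^ 2 - (C n) ^ 2) /
        (2 * C (2 * n) + 3 * C n +
          (8 / 9) * (C (2 * n) - C n) ^ 2 / (2 * C (2 * n) + 3 * C n)) < 2 * Real.pi) := by
  dsimp only
  push_cast
  have hpi := Real.pi_pos
  have hpi315 := Real.pi_lt_d2
  have hn3 : (3:ℝ) ≤ (n:ℝ) := by exact_mod_cast hn
  have hnp : (0:ℝ) < (n:ℝ) := by linarith
  set np : ℝ := (n:ℝ) with hnpd
  set x : ℝ := Real.pi / (2*np) with hxd
  have hx0 : 0 < x := by positivity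
  have hx6 : x ≤ Real.pi / 6 := by
    rw [hxd]
    apply div_le_div_of_nonneg_left hpi.le (by norm_num)
    linarith
  have hx1 : x ≤ 1 := by
    have : Real.pi / 6 < 1 := by linarith
    linarith
  have hxpi : x < Real.pi := by
    have : Real.pi / 6 < Real.pi := by linarith
    linarith
  set s : ℝ := Real.sin x with hsd
  set c : ℝ := Real.cos x with hcd
  have hs0 : 0 < s := Real.sin_pos_of_pos_of_lt_pi hx0 hxpi
  have hc1 : c ≤ 1 := Real.cos_le_one x
  have hcL := T4 hx0.le
  have hcU := T6 hx0.le
  have hsL := T5 hx0.le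
  have hsU := T7 hx0.le
  have hc0 : 0 ≤ c := by
    refine le_trans ?_ hcL
    have p2 : x^2 ≤ 1 := pow_le_one₀ hx0.le hx1
    nlinarith [pow_nonneg hx0.le 4, pow_nonneg hx0.le 6]
  have K1 := key1 hx0 hx1 hsL hcL hcU hc1
  have K2 := key2 hx0 hx1 hsU hcL hcU hc1
  have hpn : Real.pi / np = 2*x := by
    rw [hxd]; field_simp
  have h2pi : 2 * Real.pi = 4*np*x := by
    rw [hxd]; field_simp; ring
  rw [hpn, Real.sin_two_mul, ← hsd, ← hcd, h2pi]
  have hns : 0 < np * s := mul_pos hnp hs0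
  have h23c : (0:ℝ) < 2 + 3*c := by linarith
  have hden1 : 2 * (2 * (2 * np) * s) + 3 * (2 * np * (2 * s * c)) ≠ 0 := by
    have : 2 * (2 * (2 * np) * s) + 3 * (2 * np * (2 * s * c)) = 4*(np*s)*(2+3*c) := by ring
    rw [this]
    positivity
  have hQ : (0:ℝ) < 44 + 92*c + 89*c^2 := by nlinarith
  constructor
  · rw [gt_iff_lt, ← sub_pos]
    have heq : 2 * np * (2 * s * c) +
        10 / 3 * ((2 * (2 * np) * s) ^ 2 - (2 * np * (2 * s * c)) ^ 2) /
          (2 * (2 * (2 * np) * s) + 3 * (2 * np * (2 * s * c))) - 4*np*x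
        = (4 * np * (s*(10+6*c-c^2) - 3*x*(2+3*c))) / (3*(2+3*c)) := by
      field_simp [hden1, h23c.ne']
      ring
    rw [heq]
    apply div_pos
    · nlinarith [mul_pos hnp (sub_pos.2 K1)]
    · linarith
  · have hA : (0:ℝ) < 2 * (2 * (2 * np) * s) + 3 * (2 * np * (2 * s * c)) := by
      nlinarith
    have hden2 : 2 * (2 * (2 * np) * s) + 3 * (2 * np * (2 * s * c)) +
        8 / 9 * (2 * (2 * np) * s - 2 * np * (2 * s * c)) ^ 2 /
          (2 * (2 * (2 * np) * s) + 3 * (2 * np * (2 * s * c))) ≠ 0 := by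
      have h2 : (0:ℝ) ≤ 8 / 9 * (2 * (2 * np) * s - 2 * np * (2 * s * c)) ^ 2 /
          (2 * (2 * (2 * np) * s) + 3 * (2 * np * (2 * s * c))) := by positivity
      positivity
    have hfrac : 10 / 3 * ((2 * (2 * np) * s) ^ 2 - (2 * np * (2 * s * c)) ^ 2) /
          (2 * (2 * (2 * np) * s) + 3 * (2 * np * (2 * s * c)) +
            8 / 9 * (2 * (2 * np) * s - 2 * np * (2 * s * c)) ^ 2 /
              (2 * (2 * (2 * np) * s) + 3 * (2 * np * (2 * s * c))))
        = 120*np*s*(1-c^2)*(2+3*c)/(44+92*c+89*c^2) := by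
      rw [div_eq_div_iff hden2 hQ.ne']
      field_simp
      ring
    rw [hfrac, ← sub_pos]
    have heq : 4*np*x - (2 * np * (2 * s * c) + 120*np*s*(1-c^2)*(2+3*c)/(44+92*c+89*c^2))
        = (4 * np * (x*(44+92*c+89*c^2) - s*(60+134*c+32*c^2-c^3))) / (44+92*c+89*c^2) := by
      field_simp
      ring
    rw [heq]
    apply div_pos
    · nlinarith [mul_pos hnp (sub_pos.2 K2)]
    · linarith
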